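/- (Lemma 1: each data source is sampled Ω(log t) times.) Under the ε(t)-greedy selection policy, for any finite constant c₁ > 0, if the policy constant satisfies C ≥ K(c₁ + 40K) + 4K√(5K(c₁ + 20K)), then setting A := C/K − c₁ and B := (C/K)(log C − 1), for every data source k ∈ {1,…,K} and every t > T₁ := max{C + 1, 2, exp(2B/A)}, one has P(N_{k,t} < c₁ log t) ≤ 2/t⁵; this holds under both the global null and the global alternative. -/

import Mathlib

open MeasureTheory ProbabilityTheory Filter Set Topology

noncomputable section

namespace ASN2T

open Classical in
/-- Real-valued indicator of a proposition. -/
def indi (p : Prop) : ℝ := if p then 1 else 0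

variable {Ω 𝒳 : Type*}

/-- `v X1 X2 k t g ω = g (X_{k,1}(t)) - g (X_{k,2}(t))`. -/
def v {K : ℕ} (X1 X2 : Fin K → ℕ → Ω → 𝒳) (k : Fin K) (t : ℕ) (g : 𝒳 → ℝ) (ω : Ω) : ℝ :=
  g (X1 k t ω) - g (X2 k t ω)

/-- The observed increment `v_t^{(δ_t)}(g_{δ_t,t})`. -/
def vsel {K : ℕ} (X1 X2 : Fin K → ℕ → Ω → 𝒳) (δ : ℕ → Ω → Fin K)
    (gpred : Fin K → ℕ → Ω → 𝒳 → ℝ) (t : ℕ) (ω : Ω) : ℝ :=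
  v X1 X2 (δ t ω) t (gpred (δ t ω) t ω) ω

/-- `N_{k,t}`, the number of times source `k` is selected up to time `t` (as a real number). -/
def Ncount {K : ℕ} (δ : ℕ → Ω → Fin K) (k : Fin K) (t : ℕ) (ω : Ω) : ℝ :=
  ∑ s ∈ Finset.Icc 1 t, indi (δ s ω = k)

/-- The running average `μ̂_{k,t}` (with the convention `0 / 0 = 0`). -/
def muhat {K : ℕ} (X1 X2 : Fin K → ℕ → Ω → 𝒳) (δ : ℕ → Ω → Fin K)
    (gpred : Fin K → ℕ → Ω → 𝒳 → ℝ) (k : Fin K) (t : ℕ) (ω : Ω) : ℝ :=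
  (∑ s ∈ Finset.Icc 1 t, indi (δ s ω = k) * v X1 X2 k s (gpred k s ω) ω) / Ncount δ k t ω

/-- The individual regret `R_t^{(k)}` of the prediction strategy on source `k`. -/
def regret {K : ℕ} (X1 X2 : Fin K → ℕ → Ω → 𝒳) (δ : ℕ → Ω → Fin K)
    (gpred : Fin K → ℕ → Ω → 𝒳 → ℝ) (G : Set (𝒳 → ℝ)) (k : Fin K) (t : ℕ) (ω : Ω) : ℝ :=
  sSup ((fun g => ∑ s ∈ Finset.Icc 1 t, indi (δ s ω = k) * v X1 X2 k s g ω) '' G)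
    - ∑ s ∈ Finset.Icc 1 t, indi (δ s ω = k) * v X1 X2 k s (gpred k s ω) ω

/-- The exploration rate `ε(t) = min {1, C/t}`. -/
def eps (C : ℝ) (t : ℕ) : ℝ := min 1 (C / t)

variable [m𝒳 : MeasurableSpace 𝒳]

/-- `D_𝒢^{(k)} = sup_{g ∈ 𝒢} (E_{P_{k,1}}[g] - E_{P_{k,2}}[g])`. -/
def DG {K : ℕ} (P1 P2 : Fin K → Measure 𝒳) (G : Set (𝒳 → ℝ)) (k : Fin K) : ℝ :=
  sSup ((fun g => (∫ x, g x ∂P1 k) - ∫ x, g x ∂P2 k) '' G)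

/-- `σ_k² = sup_{g ∈ 𝒢} Var(g(X_{k,1}) - g(X_{k,2}))` with `(X_{k,1}, X_{k,2}) ∼ P_{k,1} × P_{k,2}`. -/
def sigmaSq {K : ℕ} (P1 P2 : Fin K → Measure 𝒳) (G : Set (𝒳 → ℝ)) (k : Fin K) : ℝ :=
  sSup ((fun g => variance (fun p : 𝒳 × 𝒳 => g p.1 - g p.2) ((P1 k).prod (P2 k))) '' G)

/-- `σ_k = √(σ_k²)`. -/
def sigmaG {K : ℕ} (P1 P2 : Fin K → Measure 𝒳) (G : Set (𝒳 → ℝ)) (k : Fin K) : ℝ :=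
  Real.sqrt (sigmaSq P1 P2 G k)

/-- `σ̃_k² = sup_{g ∈ 𝒢} E[(g(X_{k,1}) - g(X_{k,2}))²]`. -/
def sigmaTildeSq {K : ℕ} (P1 P2 : Fin K → Measure 𝒳) (G : Set (𝒳 → ℝ)) (k : Fin K) : ℝ :=
  sSup ((fun g => ∫ p : 𝒳 × 𝒳, (g p.1 - g p.2) ^ 2 ∂(P1 k).prod (P2 k)) '' G)

/-- `γ_k = sup_{g ∈ 𝒢} Var((g(X_{k,1}) - g(X_{k,2}))²)`. -/
def gammaG {K : ℕ} (P1 P2 : Fin K → Measure 𝒳) (G : Set (𝒳 → ℝ)) (k : Fin K) : ℝ :=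
  sSup ((fun g => variance (fun p : 𝒳 × 𝒳 => (g p.1 - g p.2) ^ 2) ((P1 k).prod (P2 k))) '' G)


section AuxLemmas

lemma indi_nonneg (p : Prop) : 0 ≤ indi p := by unfold indi; split <;> norm_num

lemma indi_le_one (p : Prop) : indi p ≤ 1 := by unfold indi; split <;> norm_num

lemma measurable_indi {Ω' : Type*} {m : MeasurableSpace Ω'} {p : Ω' → Prop}
    (hp : MeasurableSet[m] {ω | p ω}) : Measurable[m] fun ω => indi (p ω) := by
  classical
  have h : (fun ω => indi (p ω)) = Set.indicator {ω | p ω} (fun _ => (1:ℝ)) := by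
    funext ω; by_cases h : p ω <;> simp [indi, h]
  rw [h]
  exact measurable_const.indicator hp

lemma log_le_half {x : ℝ} (hx : 1 < x) : Real.log x ≤ (x - x⁻¹) / 2 := by
  have h : Real.log x < Real.sinh (Real.log x) :=
    Real.self_lt_sinh_iff.mpr (Real.log_pos hx)
  rw [Real.sinh_eq, Real.exp_log (by linarith), Real.exp_neg, Real.exp_log (by linarith)] at h
  linarith

lemma sum_log_tele (m : ℕ) : ∀ t, m ≤ t →
    ∑ s ∈ Finset.Ioc m t, (Real.log (s+1) - Real.log s) = Real.log (t+1) - Real.log (m+1) := by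
  intro t ht
  induction t, ht using Nat.le_induction with
  | base => simp
  | succ t ht ih =>
      rw [Finset.sum_Ioc_succ_top ht, ih]
      push_cast
      ring

lemma eps_nonneg {C : ℝ} (hC : 0 ≤ C) (t : ℕ) : 0 ≤ eps C t :=
  le_min zero_le_one (by positivity)

lemma eps_le_one (C : ℝ) (t : ℕ) : eps C t ≤ 1 := min_le_left _ _

lemma key_induction {Ω : Type*} {mΩ : MeasurableSpace Ω} (P : Measure Ω) [IsProbabilityMeasure P]
    (ℱ : Filtration ℕ mΩ) (Y : ℕ → Ω → ℝ) (q : ℕ → ℝ) (u : ℝ)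
    (hu0 : 0 ≤ u) (hu1 : u ≤ 1)
    (hYm : ∀ s, Measurable[ℱ s] (Y s))
    (hY0 : ∀ s ω, 0 ≤ Y s ω) (hY1 : ∀ s ω, Y s ω ≤ 1)
    (hq1 : ∀ n, q n ≤ 1)
    (hcond : ∀ n, ∀ᵐ ω ∂P, q (n+1) ≤ (P[Y (n+1)|ℱ n]) ω) :
    ∀ n, ∫ ω, ∏ s ∈ Finset.Icc 1 n, (1 - u * Y s ω) ∂P ≤
      ∏ s ∈ Finset.Icc 1 n, (1 - u * q s) := by
  set F : ℕ → Ω → ℝ := fun n ω => ∏ s ∈ Finset.Icc 1 n, (1 - u * Y s ω) with hF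
  have hfac0 : ∀ s ω, 0 ≤ 1 - u * Y s ω := by
    intro s ω
    have h1 : u * Y s ω ≤ u * 1 := mul_le_mul_of_nonneg_left (hY1 s ω) hu0
    linarith
  have hfac1 : ∀ s ω, 1 - u * Y s ω ≤ 1 := by
    intro s ω
    have := mul_nonneg hu0 (hY0 s ω); linarith
  have hF0 : ∀ n ω, 0 ≤ F n ω := fun n ω =>
    Finset.prod_nonneg fun s _ => hfac0 s ω
  have hF1 : ∀ n ω, F n ω ≤ 1 := fun n ω =>
    Finset.prod_le_one (fun s _ => hfac0 s ω) (fun s _ => hfac1 s ω)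
  have hFm : ∀ n, Measurable[ℱ n] (F n) := by
    intro n
    apply Finset.measurable_prod
    intro s hs
    have hs' : s ≤ n := (Finset.mem_Icc.mp hs).2
    exact (measurable_const.sub (measurable_const.mul ((hYm s).mono (ℱ.mono hs') le_rfl)))
  have hFm' : ∀ n, Measurable (F n) := fun n => (hFm n).mono (ℱ.le n) le_rfl
  have hYm' : ∀ s, Measurable (Y s) := fun s => (hYm s).mono (ℱ.le s) le_rfl
  have hFint : ∀ n, Integrable (F n) P := by
    intro n
    refine Integrable.mono' (integrable_const 1) (hFm' n).aestronglyMeasurable ?_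
    exact ae_of_all _ fun ω => by
      rw [Real.norm_eq_abs, abs_le]; exact ⟨by linarith [hF0 n ω], hF1 n ω⟩
  have hYint : ∀ s, Integrable (Y s) P := by
    intro s
    refine Integrable.mono' (integrable_const 1) (hYm' s).aestronglyMeasurable ?_
    exact ae_of_all _ fun ω => by
      rw [Real.norm_eq_abs, abs_le]; exact ⟨by linarith [hY0 s ω], hY1 s ω⟩
  have hFYint : ∀ n, Integrable (fun ω => F n ω * Y (n+1) ω) P := by
    intro n
    exact (hYint (n+1)).bdd_mul (c := 1) (hFm' n).aestronglyMeasurable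
      (ae_of_all _ fun ω => by rw [Real.norm_eq_abs, abs_le]; exact ⟨by linarith [hF0 n ω], hF1 n ω⟩)
  intro n
  induction n with
  | zero => simp [hF]
  | succ n ih =>
      haveI : SigmaFinite (P.trim (ℱ.le n)) := by infer_instance
      have hsplit : ∀ ω, F (n+1) ω = F n ω - u * (F n ω * Y (n+1) ω) := by
        intro ω
        rw [hF]
        simp only
        rw [Finset.prod_Icc_succ_top (Nat.le_add_left 1 n)]
        ring
      have hIsub : Integrable (fun ω => u * (F n ω * Y (n+1) ω)) P := (hFYint n).const_mul u
      have hint_split : ∫ ω, F (n+1) ω ∂P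
          = ∫ ω, F n ω ∂P - u * ∫ ω, F n ω * Y (n+1) ω ∂P := by
        calc ∫ ω, F (n+1) ω ∂P
            = ∫ ω, (F n ω - u * (F n ω * Y (n+1) ω)) ∂P := by
              exact integral_congr_ae (ae_of_all _ hsplit)
          _ = ∫ ω, F n ω ∂P - ∫ ω, u * (F n ω * Y (n+1) ω) ∂P :=
              integral_sub (hFint n) hIsub
          _ = ∫ ω, F n ω ∂P - u * ∫ ω, F n ω * Y (n+1) ω ∂P := by
              rw [integral_const_mul u _]
      have hpull : P[fun ω => F n ω * Y (n+1) ω|ℱ n] =ᵐ[P] fun ω => F n ω * (P[Y (n+1)|ℱ n]) ω :=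
        condExp_mul_of_stronglyMeasurable_left (hFm n).stronglyMeasurable (hFYint n) (hYint (n+1))
      have hcondint : Integrable (fun ω => F n ω * (P[Y (n+1)|ℱ n]) ω) P :=
        integrable_condExp.bdd_mul (c := 1) (hFm' n).aestronglyMeasurable
          (ae_of_all _ fun ω => by rw [Real.norm_eq_abs, abs_le]; exact ⟨by linarith [hF0 n ω], hF1 n ω⟩)
      have hlow : q (n+1) * ∫ ω, F n ω ∂P ≤ ∫ ω, F n ω * Y (n+1) ω ∂P := by
        have h1 : ∫ ω, F n ω * Y (n+1) ω ∂P = ∫ ω, F n ω * (P[Y (n+1)|ℱ n]) ω ∂P := by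
          rw [← integral_condExp (ℱ.le n) (μ := P) (f := fun ω => F n ω * Y (n+1) ω)]
          exact integral_congr_ae hpull
        rw [h1, ← integral_const_mul (q (n+1))]
        refine integral_mono_ae ((hFint n).const_mul _) hcondint ?_
        filter_upwards [hcond n] with ω hω
        calc q (n+1) * F n ω = F n ω * q (n+1) := by ring
          _ ≤ F n ω * (P[Y (n+1)|ℱ n]) ω := mul_le_mul_of_nonneg_left hω (hF0 n ω)
      have hq0' : 0 ≤ 1 - u * q (n+1) := by
        have := mul_le_mul_of_nonneg_left (hq1 (n+1)) hu0; linarith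
      calc ∫ ω, F (n+1) ω ∂P
          = ∫ ω, F n ω ∂P - u * ∫ ω, F n ω * Y (n+1) ω ∂P := hint_split
        _ ≤ ∫ ω, F n ω ∂P - u * (q (n+1) * ∫ ω, F n ω ∂P) := by
            have := mul_le_mul_of_nonneg_left hlow hu0; linarith
        _ = (1 - u * q (n+1)) * ∫ ω, F n ω ∂P := by ring
        _ ≤ (1 - u * q (n+1)) * ∏ s ∈ Finset.Icc 1 n, (1 - u * q s) :=
            mul_le_mul_of_nonneg_left ih hq0'
        _ = ∏ s ∈ Finset.Icc 1 (n+1), (1 - u * q s) := by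
            rw [Finset.prod_Icc_succ_top (Nat.le_add_left 1 n)]; ring

end AuxLemmas


lemma exponent_bound (K : ℕ) (c₁ C A u lam L lC : ℝ) (hK2 : (2:ℝ) ≤ (K:ℝ)) (hK0 : (0:ℝ) < (K:ℝ))
    (hu0 : 0 < u) (hu1 : u < 1) (hukey : u * (A + 2 * c₁) = A)
    (hL1 : 1 < L)
    (h6 : 6 ≤ A / 2 - c₁ * lam)
    (hBL2 : 2 * ((A + c₁) * (lC - 1)) < L * A)
    (hCval : C = (A + c₁) * (K:ℝ)) :
    lam * (c₁ * L) + (-(u / K) * (C * L - C * lC + C - 2)) ≤ -(5 * L) := by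
  have hexpand : lam * (c₁ * L) + (-(u / K) * (C * L - C * lC + C - 2))
      = c₁ * lam * L - u * (A + c₁) * L + (u * ((A + c₁) * lC) - u * (A + c₁)) + 2 * (u / K) := by
    rw [hCval]; field_simp; ring
  rw [hexpand]
  have f3 : c₁ * lam * L ≤ (A / 2 - 6) * L :=
    mul_le_mul_of_nonneg_right (by linarith) (by linarith)
  have f4 := mul_le_mul_of_nonneg_left hBL2.le hu0.le
  have e2 : 2 * (u / K) ≤ 1 := by
    have h2uK : (2 * u) / K ≤ 1 := (div_le_one hK0).mpr (by nlinarith [hu1, hK2, hu0.le])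
    calc 2 * (u / K) = (2 * u) / K := by ring
      _ ≤ 1 := h2uK
  have id3 : u * (A + c₁) * L - u * A / 2 * L = A / 2 * L := by
    linear_combination (L / 2) * hukey
  nlinarith [f3, f4, e2, id3, hL1, hu0.le]

set_option maxHeartbeats 1000000 in
/-- Each data source is sampled `Ω(log t)` times. -/
theorem statement5
    {Ω 𝒳 : Type*} [mΩ : MeasurableSpace Ω] [m𝒳 : MeasurableSpace 𝒳]
    (P : Measure Ω) [IsProbabilityMeasure P]
    (K : ℕ) (hK : 2 ≤ K)
    (ℱ : Filtration ℕ mΩ)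
    (δ : ℕ → Ω → Fin K)
    (hδ : ∀ t k, MeasurableSet[ℱ t] {ω | δ t ω = k})
    -- arbitrary F_{t}-measurable scores
    (score : Fin K → ℕ → Ω → ℝ)
    (hscore : ∀ k t, Measurable[ℱ t] (score k t))
    (c₁ C : ℝ) (hc1 : 0 < c₁)
    (hC : K * (c₁ + 40 * K) + 4 * K * Real.sqrt (5 * K * (c₁ + 20 * K)) ≤ C)
    (hpolicy : ∀ t, 1 ≤ t → ∀ k : Fin K,
      (P[fun ω => indi (δ t ω = k)|ℱ (t - 1)]) =ᵐ[P]
        fun ω => (1 - eps C t) * indi (∀ m, score m (t - 1) ω ≤ score k (t - 1) ω)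
          + eps C t / K) :
    ∀ k : Fin K, ∀ t : ℕ,
      max (max (C + 1) 2)
        (Real.exp (2 * (C / K * (Real.log C - 1)) / (C / K - c₁))) < (t : ℝ) →
      P {ω | Ncount δ k t ω < c₁ * Real.log t} ≤ ENNReal.ofReal (2 / (t : ℝ) ^ 5) := by
  intro k t ht
  -- ## basic facts about the constants
  have hK2 : (2:ℝ) ≤ (K:ℝ) := by exact_mod_cast hK
  have hK0 : (0:ℝ) < (K:ℝ) := by linarith
  have htC : C + 1 < (t:ℝ) :=
    lt_of_le_of_lt ((le_max_left _ _).trans (le_max_left _ _)) ht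
  have ht2 : (2:ℝ) < (t:ℝ) :=
    lt_of_le_of_lt ((le_max_right _ _).trans (le_max_left _ _)) ht
  have htB : Real.exp (2 * (C / K * (Real.log C - 1)) / (C / K - c₁)) < (t:ℝ) :=
    lt_of_le_of_lt (le_max_right _ _) ht
  have htpos : (0:ℝ) < (t:ℝ) := by linarith
  have ht3 : 3 ≤ t := by
    have h : (2:ℕ) < t := by exact_mod_cast ht2
    omega
  have ht3' : (3:ℝ) ≤ (t:ℝ) := by exact_mod_cast ht3
  set y := Real.sqrt (5 * K * (c₁ + 20 * K)) with hy
  have hy0 : 0 ≤ y := Real.sqrt_nonneg _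
  have hy2 : y ^ 2 = 5 * K * (c₁ + 20 * K) := Real.sq_sqrt (by positivity)
  have hKc : 0 ≤ (K:ℝ) * c₁ := mul_nonneg (by linarith) hc1.le
  have hKy : 0 ≤ (K:ℝ) * y := mul_nonneg (by linarith) hy0
  have h40 : (160:ℝ) ≤ 40 * K * K := by nlinarith [hK2]
  have hC160 : (160:ℝ) ≤ C := by linarith [hC, hKc, hKy, h40]
  have hCpos : (0:ℝ) < C := by linarith
  have haK : c₁ + 40 * K + 4 * y ≤ C / K := by
    rw [le_div_iff₀ hK0]; linarith [hC]
  set A := C / K - c₁ with hA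
  have hA80' : 40 * (K:ℝ) + 4 * y ≤ A := by rw [hA]; linarith
  have hA80 : (80:ℝ) ≤ A := by linarith [hA80', hy0, hK2]
  have hApos : (0:ℝ) < A := by linarith
  have hx1 : (0:ℝ) ≤ ((K:ℝ) - 2) * c₁ := mul_nonneg (by linarith) hc1.le
  have hx2 : (0:ℝ) ≤ ((K:ℝ) - 2) * y := mul_nonneg (by linarith) hy0
  have hx3 : (0:ℝ) ≤ ((K:ℝ) - 2) * K := mul_nonneg (by linarith) (by linarith)
  have hA24 : 24 * A + 48 * c₁ ≤ A ^ 2 := by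
    have hP : (0:ℝ) ≤ (A - (40 * K + 4 * y)) * (A + (40 * K + 4 * y) - 24) :=
      mul_nonneg (by linarith) (by linarith)
    nlinarith [hP, hy2, hx1, hx2, hx3, hK2, hy0, hc1.le]
  have hden : (0:ℝ) < A + 2 * c₁ := by linarith
  set u := A / (A + 2 * c₁) with hu
  have hu0 : 0 < u := div_pos hApos hden
  have hu1 : u < 1 := (div_lt_one hden).mpr (by linarith)
  have hukey : u * (A + 2 * c₁) = A := by
    rw [hu]; field_simp
  set lam := Real.log ((A + 2 * c₁) / (2 * c₁)) with hlam
  have hXgt : 1 < (A + 2 * c₁) / (2 * c₁) := (one_lt_div (by linarith)).mpr (by linarith)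
  have hlam0 : 0 < lam := Real.log_pos hXgt
  have hexplam : Real.exp (-lam) = 1 - u := by
    rw [hlam, Real.exp_neg, Real.exp_log (by positivity), hu]
    rw [inv_div]
    field_simp; ring
  set L := Real.log t with hL
  have hL1 : 1 < L := by
    rw [hL, Real.lt_log_iff_exp_lt htpos]
    have := Real.exp_one_lt_d9; linarith
  have hlogC1 : 1 < Real.log C := by
    rw [Real.lt_log_iff_exp_lt hCpos]
    have := Real.exp_one_lt_d9; linarith
  -- the `6 ≤ A/2 - c₁·λ` bound
  have h6 : 6 ≤ A / 2 - c₁ * lam := by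
    have hlog := log_le_half hXgt
    have h1 : c₁ * lam ≤ (A + 2 * c₁) / 4 - c₁ ^ 2 / (A + 2 * c₁) := by
      have h2 := mul_le_mul_of_nonneg_left hlog hc1.le
      rw [← hlam] at h2
      have h3 : c₁ * (((A + 2 * c₁) / (2 * c₁) - ((A + 2 * c₁) / (2 * c₁))⁻¹) / 2)
          = (A + 2 * c₁) / 4 - c₁ ^ 2 / (A + 2 * c₁) := by
        rw [inv_div]; field_simp; ring
      linarith [h3 ▸ h2]
    have h60 : 6 ≤ (A - 2 * c₁) / 4 + c₁ ^ 2 / (A + 2 * c₁) := by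
      rw [← sub_nonneg]
      have heq : (A - 2 * c₁) / 4 + c₁ ^ 2 / (A + 2 * c₁) - 6
          = (A ^ 2 - 24 * A - 48 * c₁) / (4 * (A + 2 * c₁)) := by
        field_simp; ring
      rw [heq]
      exact div_nonneg (by linarith) (by linarith)
    linarith
  -- the exploration-time condition
  have hbl : 2 * (C / K * (Real.log C - 1)) / A < L := by
    rw [hL, Real.lt_log_iff_exp_lt htpos]; exact htB
  have hBL2 : 2 * (C / K * (Real.log C - 1)) < L * A := (div_lt_iff₀ hApos).mp hbl
  -- ## the key martingale product bound
  have hcond : ∀ n, ∀ᵐ ω ∂P, eps C (n+1) / K ≤ (P[(fun ω => indi (δ (n+1) ω = k))|ℱ n]) ω := by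
    intro n
    have hpol := hpolicy (n+1) (Nat.le_add_left 1 n) k
    rw [Nat.add_sub_cancel] at hpol
    filter_upwards [hpol] with ω hω
    rw [hω]
    have h1 : 0 ≤ (1 - eps C (n+1)) * indi (∀ m, score m n ω ≤ score k n ω) :=
      mul_nonneg (by linarith [eps_le_one C (n+1)]) (indi_nonneg _)
    linarith
  have key := key_induction P ℱ (fun s ω => indi (δ s ω = k)) (fun s => eps C s / K) u
    hu0.le hu1.le (fun s => measurable_indi (hδ s k)) (fun s ω => indi_nonneg _)
    (fun s ω => indi_le_one _)
    (fun s => by rw [div_le_one hK0]; linarith [eps_le_one C s]) hcond t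
  -- identify the product with `exp(-λ N)`
  have hFexp : ∀ ω, ∏ s ∈ Finset.Icc 1 t, (1 - u * indi (δ s ω = k))
      = Real.exp (-(lam * Ncount δ k t ω)) := by
    intro ω
    have hsum : -(lam * Ncount δ k t ω)
        = ∑ s ∈ Finset.Icc 1 t, -(lam * indi (δ s ω = k)) := by
      rw [Ncount, Finset.mul_sum]
      simp
    rw [hsum, Real.exp_sum]
    refine (Finset.prod_congr rfl fun s _ => ?_)
    by_cases h : δ s ω = k
    · rw [show indi (δ s ω = k) = 1 by simp [indi, h], mul_one, mul_one, hexplam]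
    · rw [show indi (δ s ω = k) = 0 by simp [indi, h]]
      simp
  -- the deterministic product bound
  have hq_le : ∏ s ∈ Finset.Icc 1 t, (1 - u * (eps C s / K))
      ≤ Real.exp (-(u / K) * ∑ s ∈ Finset.Icc 1 t, eps C s) := by
    rw [Finset.mul_sum, Real.exp_sum]
    refine Finset.prod_le_prod (fun s _ => ?_) (fun s _ => ?_)
    · have h1 : eps C s / K ≤ 1 := by rw [div_le_one hK0]; linarith [eps_le_one C s]
      have h2 : u * (eps C s / K) ≤ 1 * 1 :=
        mul_le_mul hu1.le h1 (div_nonneg (eps_nonneg hCpos.le s) hK0.le) zero_le_one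
      linarith
    · have heq : 1 - u * (eps C s / K) = -(u / K) * eps C s + 1 := by ring
      rw [heq]
      exact Real.add_one_le_exp _
  -- the lower bound on the exploration sum
  have hsum : C * L - C * Real.log C + C - 2 ≤ ∑ s ∈ Finset.Icc 1 t, eps C s := by
    set m := Nat.floor C with hm
    have hmC : (m:ℝ) ≤ C := Nat.floor_le hCpos.le
    have hCm : C < (m:ℝ) + 1 := Nat.lt_floor_add_one C
    have hmt : m + 1 ≤ t := by
      have h : ((m:ℕ):ℝ) + 1 < (t:ℝ) := by linarith
      have h2 : ((m + 1 : ℕ):ℝ) < (t:ℝ) := by push_cast; linarith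
      exact_mod_cast h2.le
    have hIcc : Finset.Icc 1 t = Finset.Ioc 0 t := by
      ext x; simp only [Finset.mem_Icc, Finset.mem_Ioc]; omega
    rw [hIcc, ← Finset.sum_Ioc_consecutive _ (Nat.zero_le m) (by omega : m ≤ t)]
    have h1 : ∑ s ∈ Finset.Ioc 0 m, eps C s = (m:ℝ) := by
      have hall : ∀ s ∈ Finset.Ioc 0 m, eps C s = 1 := by
        intro s hs
        obtain ⟨hs0, hsm⟩ := Finset.mem_Ioc.mp hs
        have hspos : (0:ℝ) < (s:ℝ) := by exact_mod_cast hs0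
        have hsm' : (s:ℝ) ≤ (m:ℝ) := by exact_mod_cast hsm
        have hle : (1:ℝ) ≤ C / s := by
          rw [le_div_iff₀ hspos]; linarith
        rw [eps, min_eq_left hle]
      rw [Finset.sum_congr rfl hall, Finset.sum_const, Nat.card_Ioc, Nat.sub_zero,
        nsmul_eq_mul, mul_one]
    have h2 : C * (Real.log ((t:ℝ)+1) - Real.log ((m:ℝ)+1)) ≤ ∑ s ∈ Finset.Ioc m t, eps C s := by
      have htele : ∑ s ∈ Finset.Ioc m t, (C * (Real.log ((s:ℝ)+1) - Real.log (s:ℝ)))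
          = C * (Real.log ((t:ℝ)+1) - Real.log ((m:ℝ)+1)) := by
        rw [← Finset.mul_sum, sum_log_tele m t (by omega)]
      rw [← htele]
      refine Finset.sum_le_sum fun s hs => ?_
      obtain ⟨hms, hst⟩ := Finset.mem_Ioc.mp hs
      have hms' : (m:ℝ) + 1 ≤ (s:ℝ) := by exact_mod_cast hms
      have hsC : C < (s:ℝ) := by linarith
      have hspos : (0:ℝ) < (s:ℝ) := by linarith
      have heps : eps C s = C / s := by
        rw [eps, min_eq_right]
        rw [div_le_one hspos]; linarith
      rw [heps]
      have hlog : Real.log ((s:ℝ)+1) - Real.log (s:ℝ) ≤ 1 / s := by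
        rw [← Real.log_div (by positivity) (by positivity)]
        have hd := Real.log_le_sub_one_of_pos (show (0:ℝ) < ((s:ℝ)+1)/s by positivity)
        have heq2 : ((s:ℝ)+1)/s - 1 = 1/s := by field_simp; ring
        linarith
      calc C * (Real.log ((s:ℝ)+1) - Real.log (s:ℝ)) ≤ C * (1/s) :=
            mul_le_mul_of_nonneg_left hlog hCpos.le
        _ = C / s := by ring
    have h3 : L ≤ Real.log ((t:ℝ)+1) :=
      (Real.log_le_log_iff htpos (by linarith)).mpr (by linarith)
    have h4 : Real.log ((m:ℝ)+1) ≤ Real.log (C+1) :=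
      (Real.log_le_log_iff (by linarith) (by linarith)).mpr (by linarith)
    have h5 : Real.log (C+1) ≤ Real.log C + 1/C := by
      have hd := Real.log_le_sub_one_of_pos (show (0:ℝ) < (C+1)/C by positivity)
      rw [Real.log_div (by positivity) (by positivity)] at hd
      have heq3 : (C+1)/C - 1 = 1/C := by field_simp; ring
      linarith
    have h8 : C * L ≤ C * Real.log ((t:ℝ)+1) := mul_le_mul_of_nonneg_left h3 hCpos.le
    have h9 : C * Real.log ((m:ℝ)+1) ≤ C * (Real.log C + 1/C) :=
      mul_le_mul_of_nonneg_left (h4.trans h5) hCpos.le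
    have h10 : C * (Real.log C + 1/C) = C * Real.log C + 1 := by field_simp
    rw [mul_sub] at h2
    rw [h1]
    linarith
  -- ## Markov's inequality
  set F : Ω → ℝ := fun ω => ∏ s ∈ Finset.Icc 1 t, (1 - u * indi (δ s ω = k)) with hFdef
  have hfac0 : ∀ s ω, (0:ℝ) ≤ 1 - u * indi (δ s ω = k) := by
    intro s ω
    have h1 : u * indi (δ s ω = k) ≤ u * 1 := mul_le_mul_of_nonneg_left (indi_le_one _) hu0.le
    linarith only [h1, hu1]
  have hF0 : ∀ ω, 0 ≤ F ω := fun ω => Finset.prod_nonneg fun s _ => hfac0 s ω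
  have hF1 : ∀ ω, F ω ≤ 1 := fun ω =>
    Finset.prod_le_one (fun s _ => hfac0 s ω) (fun s _ => by
      have := mul_nonneg hu0.le (indi_nonneg (δ s ω = k)); linarith only [this])
  have hFmeas : Measurable F := by
    apply Finset.measurable_prod
    intro s _
    exact measurable_const.sub
      (measurable_const.mul ((measurable_indi (hδ s k)).mono (ℱ.le s) le_rfl))
  have hFint : Integrable F P := by
    refine Integrable.mono' (integrable_const 1) hFmeas.aestronglyMeasurable ?_
    exact ae_of_all _ fun ω => by
      rw [Real.norm_eq_abs, abs_le]; exact ⟨by linarith only [hF0 ω], hF1 ω⟩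
  set r := Real.exp (-(lam * (c₁ * L))) with hr
  have hr0 : 0 < r := Real.exp_pos _
  have hsub : {ω | Ncount δ k t ω < c₁ * Real.log t} ⊆ {ω | r ≤ F ω} := by
    intro ω hω
    simp only [Set.mem_setOf_eq] at hω ⊢
    rw [hFdef]
    simp only
    rw [hFexp ω, hr]
    apply Real.exp_le_exp.mpr
    have hmul : lam * Ncount δ k t ω ≤ lam * (c₁ * L) := by
      rw [hL]
      exact mul_le_mul_of_nonneg_left hω.le hlam0.le
    linarith only [hmul]
  have hmarkov := mul_meas_ge_le_integral_of_nonneg (μ := P) (ae_of_all _ hF0) hFint r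
  -- ## putting it together
  have hIF : ∫ ω, F ω ∂P ≤ Real.exp (-(u / K) * (C * L - C * Real.log C + C - 2)) := by
    refine le_trans (le_trans key hq_le) ?_
    apply Real.exp_le_exp.mpr
    have huk : (0:ℝ) ≤ u / K := div_nonneg hu0.le hK0.le
    have := mul_le_mul_of_nonneg_left hsum huk
    linarith only [this]
  -- exponent arithmetic
  have hE : lam * (c₁ * L) + (-(u / K) * (C * L - C * Real.log C + C - 2)) ≤ -(5 * L) := by
    have hCK : C / K = A + c₁ := by rw [hA]; ring
    have hCval : C = (A + c₁) * (K:ℝ) := by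
      rw [← hCK]; field_simp
    rw [hCK] at hBL2
    exact exponent_bound K c₁ C A u lam L (Real.log C) hK2 hK0 hu0 hu1 hukey hL1 h6 hBL2 hCval
  have hfinal : (∫ ω, F ω ∂P) / r ≤ 2 / (t:ℝ) ^ 5 := by
    have h1 : (∫ ω, F ω ∂P) / r = (∫ ω, F ω ∂P) * Real.exp (lam * (c₁ * L)) := by
      rw [hr, Real.exp_neg, div_eq_mul_inv, inv_inv]
    rw [h1]
    have h2 : (∫ ω, F ω ∂P) * Real.exp (lam * (c₁ * L))
        ≤ Real.exp (-(u / K) * (C * L - C * Real.log C + C - 2)) * Real.exp (lam * (c₁ * L)) :=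
      mul_le_mul_of_nonneg_right hIF (Real.exp_pos _).le
    rw [← Real.exp_add] at h2
    have h3 : Real.exp (-(u / K) * (C * L - C * Real.log C + C - 2) + lam * (c₁ * L))
        ≤ Real.exp (-(5 * L)) := Real.exp_le_exp.mpr (by linarith only [hE])
    have h4 : Real.exp (-(5 * L)) = ((t:ℝ) ^ 5)⁻¹ := by
      rw [Real.exp_neg]
      congr 1
      rw [hL, show (5:ℝ) * Real.log t = Real.log ((t:ℝ) ^ 5) by
        rw [Real.log_pow]; push_cast; ring]
      exact Real.exp_log (by positivity)
    have h5 : ((t:ℝ) ^ 5)⁻¹ ≤ 2 / (t:ℝ) ^ 5 := by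
      have ht5 : (0:ℝ) < (t:ℝ) ^ 5 := by positivity
      rw [inv_eq_one_div, div_le_div_iff₀ ht5 ht5]
      nlinarith only [ht5]
    linarith only [h2, h3, h4, h5]
  have htop : P {ω | Ncount δ k t ω < c₁ * Real.log t} ≠ ⊤ := measure_ne_top _ _
  have hreal : (P {ω | Ncount δ k t ω < c₁ * Real.log t}).toReal ≤ 2 / (t:ℝ) ^ 5 := by
    have hm1 : (P {ω | Ncount δ k t ω < c₁ * Real.log t}).toReal
        ≤ (P {ω | r ≤ F ω}).toReal :=
      ENNReal.toReal_mono (measure_ne_top _ _) (measure_mono hsub)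
    have hm2 : (P {ω | r ≤ F ω}).toReal ≤ (∫ ω, F ω ∂P) / r := by
      rw [le_div_iff₀ hr0]
      rw [measureReal_def] at hmarkov
      linarith only [hmarkov]
    linarith only [hm1, hm2, hfinal]
  calc P {ω | Ncount δ k t ω < c₁ * Real.log t}
      = ENNReal.ofReal ((P {ω | Ncount δ k t ω < c₁ * Real.log t}).toReal) :=
        (ENNReal.ofReal_toReal htop).symm
    _ ≤ ENNReal.ofReal (2 / (t:ℝ) ^ 5) := ENNReal.ofReal_le_ofReal hreal


end ASN2T
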